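/- In a right-symmetric algebra A, for any elements a_1, …, a_{n-1} in the left normalizer N(Z(A)), any a_n ∈ A, and any z in the left center Z(A), the left-normed product satisfies a_1∘(a_2∘(⋯(a_{n-1}∘(a_n∘z))⋯)) = (a_1∘(a_2∘(⋯(a_{n-1}∘a_n)⋯)))∘z. -/

import Mathlib

/-- in a right-symmetric algebra `A`, for any `a_1, …, a_{n-1}` in the left
normalizer `N(Z(A))` (here the list `l`), any `a_n ∈ A` and any `z` in the left center
`Z(A)`, the left-normed product satisfies
`a_1∘(a_2∘(⋯(a_{n-1}∘(a_n∘z))⋯)) = (a_1∘(a_2∘(⋯(a_{n-1}∘a_n)⋯)))∘z`. -/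
theorem leftNormed_product_center {K A : Type*} [CommRing K] [AddCommGroup A] [Module K A]
    (mul : A →ₗ[K] A →ₗ[K] A)
    (hrs : ∀ a b c : A, mul a (mul b c) - mul (mul a b) c
      = mul a (mul c b) - mul (mul a c) b)
    (l : List A)
    (hl : ∀ x ∈ l, ∀ z : A, (∀ b : A, mul z b = 0) → ∀ b : A, mul (mul x z) b = 0)
    (aₙ : A) (z : A) (hz : ∀ b : A, mul z b = 0) :
    l.foldr (fun x y => mul x y) (mul aₙ z) = mul (l.foldr (fun x y => mul x y) aₙ) z := by
  induction l with
  | nil => rfl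
  | cons x l ih =>
    have ih' := ih (fun y hy => hl y (List.mem_cons_of_mem x hy))
    simp only [List.foldr_cons, ih']
    have h := hrs x (l.foldr (fun x y => mul x y) aₙ) z
    rw [hz, map_zero, hl x List.mem_cons_self z hz] at h
    exact sub_eq_zero.mp (by simpa using h)
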